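/- For continuous closed-loop dynamics and a closed specification, the supremum in the definition of resilience is attained: if the set E = {ε ≥ 0 : all ε-disturbed trajectories lie in ψ} is nonempty and bounded, then sup E ∈ E. -/

import Mathlib

/-- Trajectory of the closed-loop system `x(k+1) = F(x(k)) + d(k)` from `x0`. -/
def traj {n : ℕ} (F : (Fin n → ℝ) → Fin n → ℝ) (x0 : Fin n → ℝ)
    (d : ℕ → Fin n → ℝ) : ℕ → Fin n → ℝ
  | 0 => x0
  | k + 1 => F (traj F x0 d k) + d k

lemma traj_cont {n : ℕ} (F : (Fin n → ℝ) → Fin n → ℝ) (hF : Continuous F)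
    (x0 : Fin n → ℝ) (k : ℕ) :
    Continuous (fun d : ℕ → Fin n → ℝ => traj F x0 d k) := by
  induction k with
  | zero => exact continuous_const
  | succ k ih =>
    simp only [traj]
    exact (hF.comp ih).add (continuous_apply k)

/-- For a continuous closed-loop map and a closed specification, the supremum in the
definition of resilience is attained. -/
theorem resilience_sup_attained (n N : ℕ) (F : (Fin n → ℝ) → Fin n → ℝ)
    (hF : Continuous F) (x0 : Fin n → ℝ)
    (ψ : Set (Fin (N + 1) → Fin n → ℝ)) (hψ : IsClosed ψ)
    (E : Set ℝ)
    (hE : E = {ε : ℝ | 0 ≤ ε ∧ ∀ d : ℕ → Fin n → ℝ, (∀ k, ‖d k‖ ≤ ε) →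
      (fun i : Fin (N + 1) => traj F x0 d (i : ℕ)) ∈ ψ})
    (hne : E.Nonempty) (hbdd : BddAbove E) :
    sSup E ∈ E := by
  obtain ⟨ε0, hε0⟩ := hne
  have hε0' := hε0
  rw [hE] at hε0'
  have hle : ε0 ≤ sSup E := le_csSup hbdd hε0
  have hs0 : 0 ≤ sSup E := le_trans hε0'.1 hle
  nth_rewrite 1 [hE]
  refine ⟨hs0, fun d hd => ?_⟩
  rcases eq_or_lt_of_le hs0 with h0 | hs
  · -- sSup E = 0, so ε0 = 0 = sSup E and we use ε0 directly
    have hε0z : ε0 = sSup E := le_antisymm hle (h0 ▸ hε0'.1)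
    exact hε0'.2 d (fun k => hε0z ▸ hd k)
  · set s := sSup E with hsdef
    have key : ∀ c : ℝ, 0 ≤ c → c < 1 →
        (fun i : Fin (N + 1) => traj F x0 (c • d) (i : ℕ)) ∈ ψ := by
      intro c hc0 hc1
      have hlt : c * s < s := by nlinarith
      obtain ⟨ε, hεE, hεgt⟩ := exists_lt_of_lt_csSup ⟨ε0, hε0⟩ hlt
      rw [hE] at hεE
      have hεprop := hεE
      refine hεprop.2 _ (fun k => ?_)
      have hn : ‖(c • d) k‖ = c * ‖d k‖ := by
        simp [norm_smul, abs_of_nonneg hc0]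
      rw [hn]
      have : c * ‖d k‖ ≤ c * s := mul_le_mul_of_nonneg_left (hd k) hc0
      linarith
    have hg : Continuous (fun c : ℝ =>
        (fun i : Fin (N + 1) => traj F x0 (c • d) (i : ℕ))) := by
      apply continuous_pi
      intro i
      exact (traj_cont F hF x0 (i : ℕ)).comp (continuous_id.smul continuous_const)
    have hc : Filter.Tendsto (fun m : ℕ => (1 : ℝ) - 1 / (m + 1)) Filter.atTop (nhds 1) := by
      have h := tendsto_one_div_add_atTop_nhds_zero_nat (𝕜 := ℝ)
      simpa using tendsto_const_nhds.sub h
    have htend := (hg.tendsto 1).comp hc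
    simp only [Function.comp, one_smul] at htend
    refine hψ.mem_of_tendsto htend (Filter.Eventually.of_forall fun m => ?_)
    refine key _ ?_ ?_
    · have h1 : (1 : ℝ) / (m + 1) ≤ 1 := by
        rw [div_le_one (by positivity)]
        linarith [Nat.cast_nonneg (α := ℝ) m]
      linarith
    · have h2 : (0 : ℝ) < 1 / (m + 1) := by positivity
      linarith
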